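/- Let 0 < ε₀ ≤ 1 and fix 1 ≤ j ≤ d. There exist constants 0 < c ≤ C < ∞, depending only on ε₀, d, n, the d_p, the m_p, and the ω_l, such that for every nonzero ξ ∈ ℝ^d with all components nonnegative and ξ_j ≥ ε₀|ξ|, the point a = x(ξ) ∈ ∂D satisfies: (i) a_j ≥ c; (ii) a_l ≤ C · (ξ_l/|ξ|)^{1/(m_{j,l} ω_l − 1)} for every l ≠ j; and (iii) if moreover p(l) = p(j) and ξ_l > 0 then c · (ξ_l/|ξ|)^{1/(ω_l − 1)} ≤ a_l ≤ C · (ξ_l/|ξ|)^{1/(ω_l − 1)}. -/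

import Mathlib

open MeasureTheory Finset Real Filter Pointwise

noncomputable section

/-- The block of (0-indexed) coordinates `l` with `dp p ≤ l < dp (p+1)`. -/
def block (dd : ℕ) (dp : ℕ → ℕ) (p : ℕ) : Finset (Fin dd) :=
  Finset.univ.filter fun l => dp p ≤ (l : ℕ) ∧ (l : ℕ) < dp (p + 1)

/-- The defining function of the domain `D`. -/
def Ffun (dd nn : ℕ) (dp m : ℕ → ℕ) (ω : Fin dd → ℕ)
    (x : EuclideanSpace ℝ (Fin dd)) : ℝ :=
  ∑ p ∈ Finset.range nn, (∑ l ∈ block dd dp p, x l ^ ω l) ^ m p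

/-- The domain `D`. -/
def Dset (dd nn : ℕ) (dp m : ℕ → ℕ) (ω : Fin dd → ℕ) :
    Set (EuclideanSpace ℝ (Fin dd)) :=
  {x | Ffun dd nn dp m ω x ≤ 1}

/-- The exponents `m_{j,l}`. -/
def mjl (dd : ℕ) (m : ℕ → ℕ) (pIdx : Fin dd → ℕ) (j l : Fin dd) : ℕ :=
  if pIdx j = pIdx l then 1 else m (pIdx l)

/-- The Fourier transform of the indicator function of a set. -/
def ftInd (dd : ℕ) (D : Set (EuclideanSpace ℝ (Fin dd)))
    (ξ : EuclideanSpace ℝ (Fin dd)) : ℂ :=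
  ∫ x in D, Complex.exp (-2 * Real.pi * Complex.I * ((inner ℝ x ξ : ℝ) : ℂ))

/-- The Fourier transform of a (real-valued) function. -/
def ftFun (dd : ℕ) (f : EuclideanSpace ℝ (Fin dd) → ℝ)
    (ξ : EuclideanSpace ℝ (Fin dd)) : ℂ :=
  ∫ x, (f x : ℂ) * Complex.exp (-2 * Real.pi * Complex.I * ((inner ℝ x ξ : ℝ) : ℂ))

/-- The number of lattice points in the dilate `t • D`. -/
def latCount (dd : ℕ) (D : Set (EuclideanSpace ℝ (Fin dd))) (t : ℝ) : ℕ :=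
  Set.ncard {k : Fin dd → ℤ | (WithLp.toLp 2 (fun i => (k i : ℝ)) : EuclideanSpace ℝ (Fin dd)) ∈ t • D}

section NPCBAux

variable (dd nn : ℕ) (dp m : ℕ → ℕ) (ω : Fin dd → ℕ) (pIdx : Fin dd → ℕ)

lemma npcb_dp_le (hmono : ∀ p < nn, dp p < dp (p + 1)) :
    ∀ p q, p ≤ q → q ≤ nn → dp p ≤ dp q := by
  intro p q hpq hq
  induction q with
  | zero => have : p = 0 := by omega
            subst this; exact le_refl _
  | succ k ih =>
    rcases Nat.eq_or_lt_of_le hpq with h | h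
    · subst h; exact le_refl _
    · have h1 : dp p ≤ dp k := ih (by omega) (by omega)
      have h2 : dp k < dp (k+1) := hmono k (by omega)
      omega

lemma npcb_mem_block_iff
    (hmono : ∀ p < nn, dp p < dp (p + 1))
    (hp : ∀ i : Fin dd, pIdx i < nn ∧ dp (pIdx i) ≤ (i : ℕ) ∧ (i : ℕ) < dp (pIdx i + 1))
    {p : ℕ} (hpn : p < nn) (l : Fin dd) :
    l ∈ block dd dp p ↔ pIdx l = p := by
  simp only [block, Finset.mem_filter, Finset.mem_univ, true_and]
  constructor
  · rintro ⟨h1, h2⟩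
    obtain ⟨hq, hq1, hq2⟩ := hp l
    by_contra hne
    rcases Nat.lt_or_ge (pIdx l) p with h | h
    · have := npcb_dp_le nn dp hmono (pIdx l + 1) p (by omega) (by omega)
      omega
    · have : p + 1 ≤ pIdx l := by omega
      have := npcb_dp_le nn dp hmono (p + 1) (pIdx l) this (by omega)
      omega
  · rintro rfl
    exact ⟨(hp l).2.1, (hp l).2.2⟩

lemma npcb_sum_partition
    (hmono : ∀ p < nn, dp p < dp (p + 1))
    (hp : ∀ i : Fin dd, pIdx i < nn ∧ dp (pIdx i) ≤ (i : ℕ) ∧ (i : ℕ) < dp (pIdx i + 1))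
    (f : Fin dd → ℝ) :
    ∑ p ∈ Finset.range nn, ∑ l ∈ block dd dp p, f l = ∑ l, f l := by
  have : ∀ p ∈ Finset.range nn, ∑ l ∈ block dd dp p, f l
      = ∑ l ∈ Finset.univ.filter (fun l => pIdx l = p), f l := by
    intro p hpn
    apply Finset.sum_congr _ (fun _ _ => rfl)
    ext l
    simp [npcb_mem_block_iff dd nn dp pIdx hmono hp (Finset.mem_range.mp hpn) l]
  rw [Finset.sum_congr rfl this]
  exact Finset.sum_fiberwise_of_maps_to (fun l _ => Finset.mem_range.mpr (hp l).1) f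

def gvec (a : EuclideanSpace ℝ (Fin dd)) : EuclideanSpace ℝ (Fin dd) :=
  WithLp.toLp 2 (fun i => (m (pIdx i) : ℝ) * (∑ l ∈ block dd dp (pIdx i), a l ^ ω l) ^ (m (pIdx i) - 1)
    * ((ω i : ℝ) * a i ^ (ω i - 1)))

lemma npcb_hasGradient
    (hmono : ∀ p < nn, dp p < dp (p + 1))
    (hp : ∀ i : Fin dd, pIdx i < nn ∧ dp (pIdx i) ≤ (i : ℕ) ∧ (i : ℕ) < dp (pIdx i + 1))
    (a : EuclideanSpace ℝ (Fin dd)) :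
    HasGradientAt (Ffun dd nn dp m ω) (gvec dd dp m ω pIdx a) a := by
  rw [hasGradientAt_iff_hasFDerivAt]
  have hS : ∀ p, HasFDerivAt (fun x : EuclideanSpace ℝ (Fin dd) => ∑ l ∈ block dd dp p, x l ^ ω l)
      (∑ l ∈ block dd dp p, ((ω l : ℝ) * a l ^ (ω l - 1)) • (EuclideanSpace.proj l : EuclideanSpace ℝ (Fin dd) →L[ℝ] ℝ)) a := by
    intro p
    apply HasFDerivAt.fun_sum
    intro l _
    have h1 : HasFDerivAt (fun x : EuclideanSpace ℝ (Fin dd) => x l)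
        (EuclideanSpace.proj l : EuclideanSpace ℝ (Fin dd) →L[ℝ] ℝ) a :=
      (EuclideanSpace.proj l : EuclideanSpace ℝ (Fin dd) →L[ℝ] ℝ).hasFDerivAt
    exact (hasDerivAt_pow (ω l) (a l)).comp_hasFDerivAt a h1
  have hF : HasFDerivAt (Ffun dd nn dp m ω)
      (∑ p ∈ Finset.range nn, ((m p : ℝ) * (∑ l ∈ block dd dp p, a l ^ ω l) ^ (m p - 1)) •
        (∑ l ∈ block dd dp p, ((ω l : ℝ) * a l ^ (ω l - 1)) • (EuclideanSpace.proj l : EuclideanSpace ℝ (Fin dd) →L[ℝ] ℝ))) a := by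
    apply HasFDerivAt.fun_sum
    intro p _
    exact (hasDerivAt_pow (m p) _).comp_hasFDerivAt a (hS p)
  refine hF.congr_fderiv (Eq.symm ?_)
  apply ContinuousLinearMap.ext
  intro v
  rw [InnerProductSpace.toDual_apply_apply]
  rw [PiLp.inner_apply]
  simp only [ContinuousLinearMap.sum_apply, ContinuousLinearMap.smul_apply,
    PiLp.proj_apply, smul_eq_mul, RCLike.inner_apply, conj_trivial]
  rw [← npcb_sum_partition dd nn dp pIdx hmono hp (fun i => v i * gvec dd dp m ω pIdx a i)]
  apply Finset.sum_congr rfl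
  intro p hpn
  rw [Finset.mul_sum]
  apply Finset.sum_congr rfl
  intro l hl
  have hpl : pIdx l = p := (npcb_mem_block_iff dd nn dp pIdx hmono hp (Finset.mem_range.mp hpn) l).mp hl
  simp only [gvec, hpl, PiLp.proj_apply]
  ring

lemma npcb_abs_coord_le_norm (x : EuclideanSpace ℝ (Fin dd)) (i : Fin dd) : |x i| ≤ ‖x‖ := by
  rw [EuclideanSpace.norm_eq]
  have h1 : |x i| = Real.sqrt (‖x i‖ ^ 2) := by
    rw [Real.sqrt_sq (norm_nonneg _), Real.norm_eq_abs]
  rw [h1]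
  exact Real.sqrt_le_sqrt (Finset.single_le_sum (fun k _ => sq_nonneg ‖x k‖) (Finset.mem_univ i))

lemma npcb_norm_le (x : EuclideanSpace ℝ (Fin dd)) (b : ℝ) (hb0 : 0 ≤ b) (hd1 : 1 ≤ dd)
    (hb : ∀ i, |x i| ≤ b) : ‖x‖ ≤ (dd : ℝ) * b := by
  rw [EuclideanSpace.norm_eq]
  have h1 : ∑ i, ‖x i‖ ^ 2 ≤ ((dd : ℝ) * b) ^ 2 := by
    calc ∑ i, ‖x i‖ ^ 2 ≤ ∑ _i : Fin dd, b ^ 2 := by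
          apply Finset.sum_le_sum
          intro i _
          rw [Real.norm_eq_abs]
          exact pow_le_pow_left₀ (abs_nonneg _) (hb i) 2
      _ = (dd : ℝ) * b ^ 2 := by
          rw [Finset.sum_const, Finset.card_univ, Fintype.card_fin, nsmul_eq_mul]
      _ ≤ ((dd : ℝ) * b) ^ 2 := by
          have hd : (1:ℝ) ≤ (dd:ℝ) := by exact_mod_cast hd1
          nlinarith [sq_nonneg b]
  calc Real.sqrt (∑ i, ‖x i‖ ^ 2) ≤ Real.sqrt (((dd:ℝ) * b)^2) := Real.sqrt_le_sqrt h1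
    _ = (dd:ℝ) * b := Real.sqrt_sq (by positivity)

end NPCBAux

set_option maxHeartbeats 2000000 in
theorem normal_point_coordinate_bounds
    (dd nn : ℕ) (dp m : ℕ → ℕ) (ω : Fin dd → ℕ) (pIdx : Fin dd → ℕ)
    (hd : 3 ≤ dd) (hn : 1 ≤ nn) (hdp0 : dp 0 = 0) (hdpn : dp nn = dd)
    (hmono : ∀ p < nn, dp p < dp (p + 1)) (hm : ∀ p < nn, 1 ≤ m p)
    (hω : ∀ l, Even (ω l) ∧ 0 < ω l)
    (hp : ∀ i : Fin dd, pIdx i < nn ∧ dp (pIdx i) ≤ (i : ℕ) ∧ (i : ℕ) < dp (pIdx i + 1))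
    (ε₀ : ℝ) (hε₀ : 0 < ε₀) (hε₀' : ε₀ ≤ 1) (j : Fin dd) :
    ∃ c C : ℝ, 0 < c ∧ c ≤ C ∧
      ∀ ξ : EuclideanSpace ℝ (Fin dd), ξ ≠ 0 → (∀ l, 0 ≤ ξ l) → ε₀ * ‖ξ‖ ≤ ξ j →
        ∀ a : EuclideanSpace ℝ (Fin dd), a ∈ frontier (Dset dd nn dp m ω) →
          ‖gradient (Ffun dd nn dp m ω) a‖⁻¹ • gradient (Ffun dd nn dp m ω) a =
            ‖ξ‖⁻¹ • ξ →
          c ≤ a j ∧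
          (∀ l : Fin dd, l ≠ j →
            a l ≤ C * (ξ l / ‖ξ‖) ^ (((mjl dd m pIdx j l : ℝ) * (ω l : ℝ) - 1)⁻¹)) ∧
          (∀ l : Fin dd, l ≠ j → pIdx l = pIdx j → 0 < ξ l →
            c * (ξ l / ‖ξ‖) ^ (((ω l : ℝ) - 1)⁻¹) ≤ a l ∧
              a l ≤ C * (ξ l / ‖ξ‖) ^ (((ω l : ℝ) - 1)⁻¹)) := by
  -- basic index facts
  have hFin : (0:ℕ) < dd := by omega
  have hω2 : ∀ l, 2 ≤ ω l := by
    intro l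
    obtain ⟨⟨k, hk⟩, hpos⟩ := hω l
    omega
  -- sup constants
  set W : ℕ := Finset.univ.sup ω with hWdef
  set M : ℕ := (Finset.range nn).sup m with hMdef
  have hW : ∀ l, ω l ≤ W := fun l => Finset.le_sup (Finset.mem_univ l)
  have hW2 : 2 ≤ W := le_trans (hω2 ⟨0, hFin⟩) (hW ⟨0, hFin⟩)
  have hMle : ∀ p, p < nn → m p ≤ M := fun p hpn => Finset.le_sup (Finset.mem_range.mpr hpn)
  have hM1 : 1 ≤ M := le_trans (hm 0 hn) (hMle 0 hn)
  -- real constants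
  set δ : ℝ := ((nn:ℝ) * dd)⁻¹ with hδdef
  have hnn0 : (0:ℝ) < nn := by exact_mod_cast hn
  have hdd0 : (0:ℝ) < dd := by exact_mod_cast hFin
  have hδ0 : 0 < δ := by rw [hδdef]; positivity
  have hδ1 : δ ≤ 1 := by
    rw [hδdef]
    rw [inv_le_one_iff₀]
    right
    have h1 : (1:ℝ) ≤ nn := by exact_mod_cast hn
    have h2 : (3:ℝ) ≤ dd := by exact_mod_cast hd
    nlinarith
  set γ : ℝ := δ ^ (M + 1) with hγdef
  have hγ0 : 0 < γ := pow_pos hδ0 _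
  have hγ1 : γ ≤ 1 := pow_le_one₀ hδ0.le hδ1
  set B : ℝ := (M:ℝ) * W with hBdef
  have hB1 : (1:ℝ) ≤ B := by
    have h1 : (1:ℝ) ≤ M := by exact_mod_cast hM1
    have h2 : (2:ℝ) ≤ W := by exact_mod_cast hW2
    nlinarith
  have hB0 : (0:ℝ) < B := lt_of_lt_of_le one_pos hB1
  set c : ℝ := γ * ε₀ / B with hcdef
  have hc0 : 0 < c := by positivity
  have hc1 : c ≤ 1 := by
    rw [hcdef, div_le_one hB0]
    calc γ * ε₀ ≤ 1 * 1 := mul_le_mul hγ1 hε₀' hε₀.le one_pos.le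
      _ = 1 := by ring
      _ ≤ B := hB1
  set κ : ℝ := c ^ (W * M) with hκdef
  have hκ0 : 0 < κ := pow_pos hc0 _
  have hκ1 : κ ≤ 1 := pow_le_one₀ hc0.le hc1
  set C : ℝ := (dd:ℝ) * B / κ + 1 with hCdef
  have hdd3 : (3:ℝ) ≤ (dd:ℝ) := by exact_mod_cast hd
  have hx1 : (1:ℝ) ≤ (dd:ℝ) * B / κ := by
    rw [le_div_iff₀ hκ0]
    calc 1 * κ = κ := by ring
      _ ≤ 1 := hκ1
      _ ≤ (dd:ℝ) * B := by nlinarith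
  have hC1 : (1:ℝ) ≤ C := by
    rw [hCdef]; linarith
  have hxC : (dd:ℝ) * B / κ ≤ C := by rw [hCdef]; linarith
  have hC0 : (0:ℝ) < C := lt_of_lt_of_le one_pos hC1
  refine ⟨c, C, hc0, hc1.trans hC1, ?_⟩
  intro ξ hξne hξpos hξj a ha hnormal
  -- gradient and normalization setup
  have hξnorm : (0:ℝ) < ‖ξ‖ := norm_pos_iff.mpr hξne
  set g : EuclideanSpace ℝ (Fin dd) := gvec dd dp m ω pIdx a with hgdef
  have hgrad : gradient (Ffun dd nn dp m ω) a = g :=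
    (npcb_hasGradient dd nn dp m ω pIdx hmono hp a).gradient
  rw [hgrad] at hnormal
  have hgne : g ≠ 0 := by
    intro h0
    rw [h0] at hnormal
    have : (‖ξ‖⁻¹ • ξ : EuclideanSpace ℝ (Fin dd)) = 0 := by
      rw [← hnormal]; simp
    rcases smul_eq_zero.mp this with h | h
    · exact (inv_ne_zero hξnorm.ne') h
    · exact hξne h
  have hG0 : (0:ℝ) < ‖g‖ := norm_pos_iff.mpr hgne
  set G : ℝ := ‖g‖ with hGdef
  set r : Fin dd → ℝ := fun i => ξ i / ‖ξ‖ with hrdef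
  have hgr : ∀ i, g i = G * r i := by
    intro i
    have h1 := congr_arg (fun z : EuclideanSpace ℝ (Fin dd) => z i) hnormal
    simp only [PiLp.smul_apply, smul_eq_mul] at h1
    have h2 : g i = G * (‖ξ‖⁻¹ * ξ i) := by
      rw [← h1]; field_simp
    rw [h2, hrdef]; field_simp
  have hr0 : ∀ i, 0 ≤ r i := fun i => div_nonneg (hξpos i) hξnorm.le
  have hr1 : ∀ i, r i ≤ 1 := by
    intro i
    rw [hrdef, div_le_one hξnorm]
    calc ξ i ≤ |ξ i| := le_abs_self _
      _ ≤ ‖ξ‖ := npcb_abs_coord_le_norm dd ξ i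
  have hrj : ε₀ ≤ r j := by
    rw [hrdef, le_div_iff₀ hξnorm]
    exact hξj
  have hgnn : ∀ i, 0 ≤ g i := by
    intro i; rw [hgr i]; exact mul_nonneg hG0.le (hr0 i)
  -- value at the frontier
  have hcont : Continuous (Ffun dd nn dp m ω) := by
    rw [continuous_iff_continuousAt]
    intro x
    exact ((npcb_hasGradient dd nn dp m ω pIdx hmono hp x).hasFDerivAt).continuousAt
  have hFa : Ffun dd nn dp m ω a = 1 := by
    have hsub := frontier_le_subset_eq hcont (continuous_const : Continuous fun _ : EuclideanSpace ℝ (Fin dd) => (1:ℝ))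
    exact hsub ha
  -- block sums
  set S : ℕ → ℝ := fun p => ∑ l ∈ block dd dp p, a l ^ ω l with hSdef
  have hS0 : ∀ p, 0 ≤ S p := by
    intro p
    apply Finset.sum_nonneg
    intro l _
    exact (hω l).1.pow_nonneg _
  have hterm : ∀ p ∈ Finset.range nn, S p ^ m p ≤ 1 := by
    intro p hpn
    calc S p ^ m p ≤ ∑ q ∈ Finset.range nn, S q ^ m q :=
          Finset.single_le_sum (fun q _ => pow_nonneg (hS0 q) _) hpn
      _ = 1 := hFa
  have hS1 : ∀ p, p < nn → S p ≤ 1 := by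
    intro p hpn
    have := hterm p (Finset.mem_range.mpr hpn)
    exact (pow_le_one_iff_of_nonneg (hS0 p) (by have := hm p hpn; omega)).mp this
  have haS : ∀ l : Fin dd, a l ^ ω l ≤ S (pIdx l) := by
    intro l
    exact Finset.single_le_sum (f := fun k : Fin dd => a k ^ ω k)
      (fun k _ => (hω k).1.pow_nonneg _)
      ((npcb_mem_block_iff dd nn dp pIdx hmono hp (hp l).1 l).mpr rfl)
  have habs : ∀ l : Fin dd, |a l| ≤ 1 := by
    intro l
    have h1 : |a l| ^ ω l ≤ 1 := by
      rw [← abs_pow]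
      rw [abs_of_nonneg ((hω l).1.pow_nonneg _)]
      exact le_trans (haS l) (hS1 _ (hp l).1)
    exact (pow_le_one_iff_of_nonneg (abs_nonneg _) (by have := hω2 l; omega)).mp h1
  have hgform : ∀ i : Fin dd, g i =
      (m (pIdx i) : ℝ) * S (pIdx i) ^ (m (pIdx i) - 1) * ((ω i : ℝ) * a i ^ (ω i - 1)) := by
    intro i; rfl
  -- upper bound on coordinates of g
  have hSpow01 : ∀ p, p < nn → S p ^ (m p - 1) ≤ 1 := by
    intro p hpn
    exact pow_le_one₀ (hS0 p) (hS1 p hpn)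
  have hgB : ∀ i : Fin dd, |g i| ≤ B := by
    intro i
    rw [hgform i, abs_mul, abs_mul, abs_mul]
    rw [abs_of_nonneg (by positivity : (0:ℝ) ≤ (m (pIdx i) : ℝ))]
    rw [abs_of_nonneg (pow_nonneg (hS0 _) _)]
    rw [abs_of_nonneg (by positivity : (0:ℝ) ≤ (ω i : ℝ))]
    have h1 : (m (pIdx i) : ℝ) ≤ M := by exact_mod_cast hMle _ (hp i).1
    have h2 : (ω i : ℝ) ≤ W := by exact_mod_cast hW i
    have h3 : |a i ^ (ω i - 1)| ≤ 1 := by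
      rw [abs_pow]
      exact pow_le_one₀ (abs_nonneg _) (habs i)
    have h4 : (m (pIdx i) : ℝ) * S (pIdx i) ^ (m (pIdx i) - 1) ≤ (M:ℝ) := by
      calc (m (pIdx i) : ℝ) * S (pIdx i) ^ (m (pIdx i) - 1) ≤ (M:ℝ) * 1 :=
            mul_le_mul h1 (hSpow01 _ (hp i).1) (pow_nonneg (hS0 _) _) (by positivity)
        _ = (M:ℝ) := by ring
    have h5 : (ω i : ℝ) * |a i ^ (ω i - 1)| ≤ (W:ℝ) := by
      calc (ω i : ℝ) * |a i ^ (ω i - 1)| ≤ (W:ℝ) * 1 :=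
            mul_le_mul h2 h3 (abs_nonneg _) (by positivity)
        _ = (W:ℝ) := by ring
    calc (m (pIdx i) : ℝ) * S (pIdx i) ^ (m (pIdx i) - 1) * ((ω i : ℝ) * |a i ^ (ω i - 1)|)
        ≤ (M:ℝ) * (W:ℝ) := mul_le_mul h4 h5 (by positivity) (by positivity)
      _ = B := by rw [hBdef]
  have hGB : G ≤ (dd:ℝ) * B := by
    rw [hGdef]
    exact npcb_norm_le dd g B (le_trans one_pos.le hB1) (by omega) hgB
  -- lower bound on G
  have hGγ : γ ≤ G := by
    -- find a block with large sum
    have hsum1 : ∑ p ∈ Finset.range nn, ((nn:ℝ))⁻¹ ≤ ∑ p ∈ Finset.range nn, S p ^ m p := by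
      rw [Finset.sum_const, Finset.card_range, nsmul_eq_mul, mul_inv_cancel₀ hnn0.ne']
      exact hFa.ge
    obtain ⟨p₀, hp₀mem, hp₀⟩ := Finset.exists_le_of_sum_le
      ⟨0, Finset.mem_range.mpr hn⟩ hsum1
    have hp₀n : p₀ < nn := Finset.mem_range.mp hp₀mem
    have hSp₀ : (nn:ℝ)⁻¹ ≤ S p₀ :=
      le_trans hp₀ (pow_le_of_le_one (hS0 p₀) (hS1 p₀ hp₀n) (by have := hm p₀ hp₀n; omega))
    -- find a large coordinate inside the block
    have hblockne : (block dd dp p₀).Nonempty := by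
      have h1 : dp p₀ < dp (p₀ + 1) := hmono p₀ hp₀n
      have h2 : dp (p₀ + 1) ≤ dd := by
        have := npcb_dp_le nn dp hmono (p₀+1) nn (by omega) (le_refl _)
        omega
      refine ⟨⟨dp p₀, by omega⟩, ?_⟩
      simp [block]
      omega
    have hsum2 : ∑ l ∈ block dd dp p₀, δ ≤ ∑ l ∈ block dd dp p₀, a l ^ ω l := by
      rw [Finset.sum_const, nsmul_eq_mul]
      have hcard : ((block dd dp p₀).card : ℝ) ≤ (dd:ℝ) := by
        have := Finset.card_le_card (Finset.subset_univ (block dd dp p₀))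
        rw [Finset.card_univ, Fintype.card_fin] at this
        exact_mod_cast this
      calc ((block dd dp p₀).card : ℝ) * δ ≤ (dd:ℝ) * δ :=
            mul_le_mul_of_nonneg_right hcard hδ0.le
        _ = (nn:ℝ)⁻¹ := by
            rw [hδdef, mul_inv, mul_comm ((nn:ℝ)⁻¹), ← mul_assoc,
              mul_inv_cancel₀ hdd0.ne', one_mul]
        _ ≤ S p₀ := hSp₀
    obtain ⟨l₀, hl₀mem, hl₀⟩ := Finset.exists_le_of_sum_le hblockne hsum2
    have hpl₀ : pIdx l₀ = p₀ := (npcb_mem_block_iff dd nn dp pIdx hmono hp hp₀n l₀).mp hl₀mem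
    -- lower bound |g l₀|
    have hδS : δ ≤ S p₀ := by
      refine le_trans ?_ hSp₀
      rw [hδdef, mul_inv]
      have h1 : (dd:ℝ)⁻¹ ≤ 1 := by
        rw [inv_le_one_iff₀]; right; linarith
      calc (nn:ℝ)⁻¹ * (dd:ℝ)⁻¹ ≤ (nn:ℝ)⁻¹ * 1 :=
            mul_le_mul_of_nonneg_left h1 (by positivity)
        _ = (nn:ℝ)⁻¹ := mul_one _
    have hSml : δ ^ M ≤ S p₀ ^ (m p₀ - 1) := by
      calc δ ^ M ≤ δ ^ (m p₀ - 1) :=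
            pow_le_pow_of_le_one hδ0.le hδ1 (by have := hMle p₀ hp₀n; omega)
        _ ≤ S p₀ ^ (m p₀ - 1) := pow_le_pow_left₀ hδ0.le hδS _
    have hal₀ : δ ≤ |a l₀| ^ (ω l₀ - 1) := by
      calc δ ≤ a l₀ ^ ω l₀ := hl₀
        _ = |a l₀| ^ ω l₀ := by
            rw [← abs_pow, abs_of_nonneg ((hω l₀).1.pow_nonneg _)]
        _ ≤ |a l₀| ^ (ω l₀ - 1) :=
            pow_le_pow_of_le_one (abs_nonneg _) (habs l₀) (by omega)
    have hgl₀ : γ ≤ |g l₀| := by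
      rw [hgform l₀, hpl₀, abs_mul, abs_mul, abs_mul]
      rw [abs_of_nonneg (by positivity : (0:ℝ) ≤ (m p₀ : ℝ))]
      rw [abs_of_nonneg (pow_nonneg (hS0 _) _)]
      rw [abs_of_nonneg (by positivity : (0:ℝ) ≤ (ω l₀ : ℝ))]
      rw [abs_pow]
      have h1 : (1:ℝ) ≤ (m p₀ : ℝ) := by exact_mod_cast hm p₀ hp₀n
      have h2 : (1:ℝ) ≤ (ω l₀ : ℝ) := by
        have := hω2 l₀; exact_mod_cast (by omega : 1 ≤ ω l₀)
      calc γ = δ ^ M * δ := by rw [hγdef]; ring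
        _ ≤ (1 * S p₀ ^ (m p₀ - 1)) * (1 * |a l₀| ^ (ω l₀ - 1)) := by
            rw [one_mul, one_mul]
            exact mul_le_mul hSml hal₀ hδ0.le (pow_nonneg (hS0 _) _)
        _ ≤ ((m p₀ : ℝ) * S p₀ ^ (m p₀ - 1)) * ((ω l₀ : ℝ) * |a l₀| ^ (ω l₀ - 1)) := by
            apply mul_le_mul
            · exact mul_le_mul_of_nonneg_right h1 (pow_nonneg (hS0 _) _)
            · exact mul_le_mul_of_nonneg_right h2 (pow_nonneg (abs_nonneg _) _)
            · positivity
            · exact mul_nonneg (by positivity) (pow_nonneg (hS0 _) _)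
    exact le_trans hgl₀ (by rw [hGdef]; exact npcb_abs_coord_le_norm dd g l₀)
  -- generic helpers
  have hmSle : ∀ i : Fin dd, (m (pIdx i):ℝ) * S (pIdx i) ^ (m (pIdx i) - 1) ≤ (M:ℝ) := by
    intro i
    have h1 : (m (pIdx i) : ℝ) ≤ M := by exact_mod_cast hMle _ (hp i).1
    calc (m (pIdx i) : ℝ) * S (pIdx i) ^ (m (pIdx i) - 1) ≤ (M:ℝ) * 1 :=
          mul_le_mul h1 (hSpow01 _ (hp i).1) (pow_nonneg (hS0 _) _) (by positivity)
      _ = (M:ℝ) := by ring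
  have hmS0 : ∀ i : Fin dd, 0 ≤ (m (pIdx i):ℝ) * S (pIdx i) ^ (m (pIdx i) - 1) :=
    fun i => mul_nonneg (by positivity) (pow_nonneg (hS0 _) _)
  have hodd : ∀ l : Fin dd, Odd (ω l - 1) :=
    fun l => Nat.Even.sub_odd (by have := hω2 l; omega) (hω l).1 odd_one
  have hpos : ∀ i : Fin dd, 0 < g i → 0 < a i := by
    intro i hgi
    by_contra hle
    push_neg at hle
    have h1 : a i ^ (ω i - 1) ≤ 0 := (hodd i).pow_nonpos hle
    have h3 : (ω i:ℝ) * a i ^ (ω i - 1) ≤ 0 :=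
      mul_nonpos_iff.mpr (Or.inl ⟨by positivity, h1⟩)
    have h2 : g i ≤ 0 := by
      rw [hgform i]
      exact mul_nonpos_iff.mpr (Or.inl ⟨hmS0 i, h3⟩)
    linarith
  -- part (i)
  have hγε : 0 < γ * ε₀ := by positivity
  have hgj : γ * ε₀ ≤ g j := by
    rw [hgr j]
    exact mul_le_mul hGγ hrj hε₀.le hG0.le
  have haj0 : 0 < a j := hpos j (lt_of_lt_of_le hγε hgj)
  have haj1 : a j ≤ 1 := le_trans (le_abs_self _) (habs j)
  have hBaj : g j ≤ B * a j := by
    rw [hgform j]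
    have h2 : a j ^ (ω j - 1) ≤ a j :=
      pow_le_of_le_one haj0.le haj1 (by have := hω2 j; omega)
    have h3 : (ω j:ℝ) * a j ^ (ω j - 1) ≤ (W:ℝ) * a j := by
      apply mul_le_mul (by exact_mod_cast hW j : (ω j:ℝ) ≤ (W:ℝ)) h2 (pow_nonneg haj0.le _) (by positivity)
    calc (m (pIdx j):ℝ) * S (pIdx j) ^ (m (pIdx j) - 1) * ((ω j:ℝ) * a j ^ (ω j - 1))
        ≤ (M:ℝ) * ((W:ℝ) * a j) :=
          mul_le_mul (hmSle j) h3 (mul_nonneg (by positivity) (pow_nonneg haj0.le _)) (by positivity)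
      _ = B * a j := by rw [hBdef]; ring
  have hi : c ≤ a j := by
    rw [hcdef, div_le_iff₀ hB0]
    calc γ * ε₀ ≤ g j := hgj
      _ ≤ B * a j := hBaj
      _ = a j * B := by ring
  -- the core rpow estimate
  have hcore : ∀ l : Fin dd, 0 ≤ a l → ∀ e : ℕ, 1 ≤ e →
      κ * a l ^ e ≤ g l → a l ≤ C * r l ^ ((e:ℝ))⁻¹ := by
    intro l hal e he hke
    have h2 : κ * a l ^ e ≤ (dd:ℝ)*B * r l := by
      calc κ * a l ^ e ≤ g l := hke
        _ = G * r l := hgr l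
        _ ≤ (dd:ℝ)*B * r l := mul_le_mul_of_nonneg_right hGB (hr0 l)
    have h3 : a l ^ e ≤ ((dd:ℝ)*B/κ) * r l := by
      rw [div_mul_eq_mul_div, le_div_iff₀ hκ0]
      calc a l ^ e * κ = κ * a l ^ e := by ring
        _ ≤ (dd:ℝ)*B * r l := h2
    have h6 : ((e:ℝ))⁻¹ ≤ 1 := by
      rw [inv_le_one_iff₀]; right; exact_mod_cast he
    calc a l = (a l ^ e) ^ ((e:ℝ))⁻¹ := (Real.pow_rpow_inv_natCast hal (by omega)).symm
      _ ≤ (((dd:ℝ)*B/κ) * r l) ^ ((e:ℝ))⁻¹ :=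
          Real.rpow_le_rpow (pow_nonneg hal _) h3 (by positivity)
      _ = ((dd:ℝ)*B/κ) ^ ((e:ℝ))⁻¹ * r l ^ ((e:ℝ))⁻¹ :=
          Real.mul_rpow (by positivity) (hr0 l)
      _ ≤ C * r l ^ ((e:ℝ))⁻¹ := by
          apply mul_le_mul_of_nonneg_right _ (Real.rpow_nonneg (hr0 l) _)
          have h5 : ((dd:ℝ)*B/κ) ^ ((e:ℝ))⁻¹ ≤ ((dd:ℝ)*B/κ) ^ (1:ℝ) :=
            Real.rpow_le_rpow_of_exponent_le hx1 h6
          rw [Real.rpow_one] at h5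
          exact le_trans h5 hxC
  -- key pointwise lower bound for g
  have hκa : ∀ l : Fin dd, 0 ≤ a l →
      κ * a l ^ (mjl dd m pIdx j l * ω l - 1) ≤ g l := by
    intro l hal
    have hal1 : a l ≤ 1 := le_trans (le_abs_self _) (habs l)
    have hml1 : (1:ℝ) ≤ (m (pIdx l) : ℝ) := by exact_mod_cast hm _ (hp l).1
    have hωl1 : (1:ℝ) ≤ (ω l : ℝ) := by
      have := hω2 l
      exact_mod_cast (by omega : 1 ≤ ω l)
    by_cases hq : pIdx j = pIdx l
    · -- same block
      have hmjl : mjl dd m pIdx j l = 1 := by unfold mjl; rw [if_pos hq]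
      rw [hmjl, one_mul]
      have hSq : c ^ W ≤ S (pIdx l) := by
        calc c ^ W ≤ c ^ (ω j) := pow_le_pow_of_le_one hc0.le hc1 (hW j)
          _ ≤ a j ^ (ω j) := pow_le_pow_left₀ hc0.le hi _
          _ ≤ S (pIdx j) := haS j
          _ = S (pIdx l) := by rw [hq]
      have hSm : κ ≤ S (pIdx l) ^ (m (pIdx l) - 1) := by
        calc κ = c ^ (W * M) := hκdef
          _ ≤ c ^ (W * (m (pIdx l) - 1)) := by
              apply pow_le_pow_of_le_one hc0.le hc1
              exact Nat.mul_le_mul_left W (by have := hMle _ (hp l).1; omega)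
          _ = (c ^ W) ^ (m (pIdx l) - 1) := by rw [pow_mul]
          _ ≤ S (pIdx l) ^ (m (pIdx l) - 1) := pow_le_pow_left₀ (by positivity) hSq _
      calc κ * a l ^ (ω l - 1)
          ≤ S (pIdx l) ^ (m (pIdx l) - 1) * a l ^ (ω l - 1) :=
            mul_le_mul_of_nonneg_right hSm (pow_nonneg hal _)
        _ ≤ ((m (pIdx l):ℝ) * S (pIdx l) ^ (m (pIdx l) - 1)) * ((ω l:ℝ) * a l ^ (ω l - 1)) := by
            apply mul_le_mul
            · exact le_mul_of_one_le_left (pow_nonneg (hS0 _) _) hml1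
            · exact le_mul_of_one_le_left (pow_nonneg hal _) hωl1
            · exact pow_nonneg hal _
            · exact hmS0 l
        _ = g l := (hgform l).symm
    · -- different block
      have hmjl : mjl dd m pIdx j l = m (pIdx l) := by unfold mjl; rw [if_neg hq]
      rw [hmjl]
      have hee : ω l * (m (pIdx l) - 1) + (ω l - 1) = m (pIdx l) * ω l - 1 := by
        have h1 := hm (pIdx l) (hp l).1
        have h2 := hω2 l
        obtain ⟨k, hk⟩ : ∃ k, m (pIdx l) = k + 1 := ⟨m (pIdx l) - 1, by omega⟩
        rw [hk, Nat.add_sub_cancel, Nat.add_mul, one_mul, Nat.mul_comm (ω l) k]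
        generalize k * ω l = t
        omega
      have hS2 : a l ^ (ω l * (m (pIdx l) - 1)) ≤ S (pIdx l) ^ (m (pIdx l) - 1) := by
        rw [pow_mul]
        exact pow_le_pow_left₀ (pow_nonneg hal _) (haS l) _
      calc κ * a l ^ (m (pIdx l) * ω l - 1)
          ≤ 1 * a l ^ (m (pIdx l) * ω l - 1) :=
            mul_le_mul_of_nonneg_right hκ1 (pow_nonneg hal _)
        _ = a l ^ (ω l * (m (pIdx l) - 1)) * a l ^ (ω l - 1) := by
            rw [one_mul, ← pow_add, hee]
        _ ≤ S (pIdx l) ^ (m (pIdx l) - 1) * a l ^ (ω l - 1) :=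
            mul_le_mul_of_nonneg_right hS2 (pow_nonneg hal _)
        _ ≤ ((m (pIdx l):ℝ) * S (pIdx l) ^ (m (pIdx l) - 1)) * ((ω l:ℝ) * a l ^ (ω l - 1)) := by
            apply mul_le_mul
            · exact le_mul_of_one_le_left (pow_nonneg (hS0 _) _) hml1
            · exact le_mul_of_one_le_left (pow_nonneg hal _) hωl1
            · exact pow_nonneg hal _
            · exact hmS0 l
        _ = g l := (hgform l).symm
  have hrleq : ∀ l : Fin dd, ξ l / ‖ξ‖ = r l := fun l => by rw [hrdef]
  -- part (ii)
  have hii : ∀ l : Fin dd, l ≠ j →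
      a l ≤ C * (ξ l / ‖ξ‖) ^ (((mjl dd m pIdx j l : ℝ) * (ω l : ℝ) - 1)⁻¹) := by
    intro l hlj
    have hmjl1 : 1 ≤ mjl dd m pIdx j l := by
      unfold mjl; split
      · exact le_refl 1
      · exact hm _ (hp l).1
    have hprod2 : 2 ≤ mjl dd m pIdx j l * ω l := by
      calc 2 ≤ ω l := hω2 l
        _ = 1 * ω l := (one_mul _).symm
        _ ≤ mjl dd m pIdx j l * ω l := Nat.mul_le_mul_right _ hmjl1
    have he1 : 1 ≤ mjl dd m pIdx j l * ω l - 1 := by omega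
    have hcast : ((mjl dd m pIdx j l : ℝ) * (ω l:ℝ) - 1)
        = ((mjl dd m pIdx j l * ω l - 1 : ℕ) : ℝ) := by
      rw [Nat.cast_sub (by omega)]
      push_cast
      ring
    rw [hcast, hrleq l]
    rcases le_or_gt 0 (a l) with hal | hal
    · exact hcore l hal _ he1 (hκa l hal)
    · refine le_trans hal.le ?_
      exact mul_nonneg hC0.le (Real.rpow_nonneg (hr0 l) _)
  refine ⟨hi, hii, ?_⟩
  -- part (iii)
  intro l hlj hql hξl
  have hq' : pIdx j = pIdx l := hql.symm
  have hrl : 0 < r l := div_pos hξl hξnorm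
  have hgl : 0 < g l := by rw [hgr l]; exact mul_pos hG0 hrl
  have hal : 0 < a l := hpos l hgl
  have hωl2 := hω2 l
  have hecast : ((ω l:ℝ) - 1) = ((ω l - 1 : ℕ) : ℝ) := by
    rw [Nat.cast_sub (by omega)]; push_cast; ring
  constructor
  · -- lower bound
    rw [hecast, hrleq l]
    have h4 : (ω l:ℝ) * a l ^ (ω l - 1) ≤ (W:ℝ) * a l ^ (ω l - 1) :=
      mul_le_mul_of_nonneg_right (by exact_mod_cast hW l) (pow_nonneg hal.le _)
    have h2 : g l ≤ B * a l ^ (ω l - 1) := by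
      rw [hgform l]
      calc (m (pIdx l):ℝ) * S (pIdx l) ^ (m (pIdx l) - 1) * ((ω l:ℝ) * a l ^ (ω l - 1))
          ≤ (M:ℝ) * ((W:ℝ) * a l ^ (ω l - 1)) :=
            mul_le_mul (hmSle l) h4
              (mul_nonneg (by positivity) (pow_nonneg hal.le _)) (by positivity)
        _ = B * a l ^ (ω l - 1) := by rw [hBdef]; ring
    have h3 : γ * r l ≤ B * a l ^ (ω l - 1) := by
      calc γ * r l ≤ G * r l := mul_le_mul_of_nonneg_right hGγ (hr0 l)
        _ = g l := (hgr l).symm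
        _ ≤ B * a l ^ (ω l - 1) := h2
    have hcγB : c ≤ γ / B := by
      rw [hcdef]
      have h0 : γ * ε₀ ≤ γ := by nlinarith
      apply div_le_div_of_nonneg_right h0 hB0.le
    have h5 : c * r l ≤ a l ^ (ω l - 1) := by
      calc c * r l ≤ (γ/B) * r l := mul_le_mul_of_nonneg_right hcγB (hr0 l)
        _ ≤ a l ^ (ω l - 1) := by
            rw [div_mul_eq_mul_div, div_le_iff₀ hB0]
            calc γ * r l ≤ B * a l ^ (ω l - 1) := h3
              _ = a l ^ (ω l - 1) * B := by ring
    have he0 : (ω l - 1 : ℕ) ≠ 0 := by omega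
    have h6i : (((ω l - 1 : ℕ):ℝ))⁻¹ ≤ 1 := by
      rw [inv_le_one_iff₀]; right
      exact_mod_cast (by omega : 1 ≤ ω l - 1)
    have h6 : (c * r l) ^ ((((ω l - 1:ℕ)):ℝ))⁻¹ ≤ a l := by
      calc (c * r l) ^ ((((ω l - 1:ℕ)):ℝ))⁻¹
          ≤ (a l ^ (ω l - 1)) ^ ((((ω l - 1:ℕ)):ℝ))⁻¹ :=
            Real.rpow_le_rpow (by positivity) h5 (by positivity)
        _ = a l := Real.pow_rpow_inv_natCast hal.le he0
    have h7 : c * r l ^ ((((ω l - 1:ℕ)):ℝ))⁻¹ ≤ (c * r l) ^ ((((ω l - 1:ℕ)):ℝ))⁻¹ := by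
      rw [Real.mul_rpow hc0.le (hr0 l)]
      apply mul_le_mul_of_nonneg_right _ (Real.rpow_nonneg (hr0 l) _)
      have h8 : c ^ (1:ℝ) ≤ c ^ ((((ω l - 1:ℕ)):ℝ))⁻¹ :=
        Real.rpow_le_rpow_of_exponent_ge hc0 hc1 h6i
      rw [Real.rpow_one] at h8
      exact h8
    exact le_trans h7 h6
  · -- upper bound
    have hmjl : mjl dd m pIdx j l = 1 := by unfold mjl; rw [if_pos hq']
    have h9 := hii l hlj
    rw [hmjl] at h9
    rw [Nat.cast_one, one_mul] at h9
    exact h9
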